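/- arXiv:2510.25986 — 3 statements merged into one kernel-verified Lean document; each statement's English description precedes it below -/
import Mathlib

section
/- Let W be a symmetric n×n real matrix and A an m×n real matrix of full row rank m. If W is positive definite on the kernel of A (that is, hᵀWh > 0 for every nonzero h ∈ ℝⁿ with Ah = 0), then the (n+m)×(n+m) block matrix [[W, Aᵀ], [A, 0]] is invertible. -/
open Matrix

lemma transpose_mulVec_injective {n m : ℕ} (A : Matrix (Fin m) (Fin n) ℝ)
    (hA : A.rank = m) {y : Fin m → ℝ} (hy : Aᵀ *ᵥ y = 0) : y = 0 := by
  have hrank : Aᵀ.rank = m := by rw [Matrix.rank_transpose]; exact hA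
  have hker : LinearMap.ker Aᵀ.mulVecLin = ⊥ := by
    have h1 := LinearMap.finrank_range_add_finrank_ker Aᵀ.mulVecLin
    rw [Module.finrank_pi, Fintype.card_fin] at h1
    have : Module.finrank ℝ (LinearMap.ker Aᵀ.mulVecLin) = 0 := by
      have : Module.finrank ℝ (LinearMap.range Aᵀ.mulVecLin) = m := hrank
      omega
    exact Submodule.finrank_eq_zero.mp this
  have : y ∈ LinearMap.ker Aᵀ.mulVecLin := hy
  rw [hker] at this
  simpa using this

/-- If `W` is symmetric and positive definite on the kernel of `A`, and `A` has full
row rank `m`, then the KKT matrix `[[W, Aᵀ], [A, 0]]` is invertible. -/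
theorem kkt_matrix_invertible {n m : ℕ}
    (W : Matrix (Fin n) (Fin n) ℝ) (hW : W.IsSymm)
    (A : Matrix (Fin m) (Fin n) ℝ) (hA : A.rank = m)
    (hpos : ∀ h : Fin n → ℝ, h ≠ 0 → A *ᵥ h = 0 → 0 < h ⬝ᵥ (W *ᵥ h)) :
    IsUnit (Matrix.fromBlocks W Aᵀ A (0 : Matrix (Fin m) (Fin m) ℝ)) := by
  rw [Matrix.isUnit_iff_isUnit_det, isUnit_iff_ne_zero]
  intro hdet
  obtain ⟨v, hv, hveq⟩ := (Matrix.exists_mulVec_eq_zero_iff).mpr hdet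
  set x : Fin n → ℝ := v ∘ Sum.inl with hx
  set y : Fin m → ℝ := v ∘ Sum.inr with hy
  have hv' : v = Sum.elim x y := by
    funext i; cases i <;> rfl
  rw [hv', Matrix.fromBlocks_mulVec] at hveq
  have h1 : W *ᵥ x + Aᵀ *ᵥ y = 0 := funext (fun i => congrFun hveq (Sum.inl i))
  have h2 : A *ᵥ x = 0 := by
    have := funext (fun i => congrFun hveq (Sum.inr i))
    simp at this; exact this
  -- x ⬝ᵥ (W x + Aᵀ y) = 0, and x ⬝ᵥ Aᵀ y = (A x) ⬝ᵥ y = 0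
  have hdot : x ⬝ᵥ (W *ᵥ x) = 0 := by
    have := congrArg (fun w => x ⬝ᵥ w) h1
    simp only [dotProduct_add, dotProduct_zero] at this
    have haux : x ⬝ᵥ (Aᵀ *ᵥ y) = 0 := by
      rw [Matrix.dotProduct_mulVec, Matrix.vecMul_transpose, h2]
      simp
    linarith
  have hx0 : x = 0 := by
    by_contra hx0
    exact absurd hdot (ne_of_gt (hpos x hx0 h2))
  have h1' : Aᵀ *ᵥ y = 0 := by
    rw [hx0] at h1; simpa using h1
  have hy0 : y = 0 := transpose_mulVec_injective A hA h1'
  apply hv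
  rw [hv', hx0, hy0]
  ext i; cases i <;> rfl
end

section
/- Let W be a symmetric n×n real matrix, A an m×n real matrix, and x, ν ∈ ℝⁿ with x ≥ 0 and ν ≥ 0 componentwise. Assume strict complementarity: for every index i, xᵢνᵢ = 0 and xᵢ + νᵢ > 0; let 𝒜 := {i : xᵢ = 0} be the active set. Assume LICQ: the m rows of A together with the standard unit vectors {eᵢ : i ∈ 𝒜} form a linearly independent family in ℝⁿ. Assume the reduced second-order condition: hᵀWh > 0 for every nonzero h ∈ ℝⁿ with Ah = 0 and hᵢ = 0 for all i ∈ 𝒜. Then the (2n+m)×(2n+m) block matrix M = [[W, Aᵀ, −Iₙ], [A, 0, 0], [V, 0, X]], where X = diag(x) and V = diag(ν), is invertible. -/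
open Matrix

/-- Under strict complementarity, LICQ and the reduced second-order condition, the
Jacobian `M = [[W, Aᵀ, -I], [A, 0, 0], [V, 0, X]]` of the KKT residual is invertible,
where `X = diag(x)` and `V = diag(ν)`. -/
theorem kkt_jacobian_invertible {n m : ℕ}
    (W : Matrix (Fin n) (Fin n) ℝ) (hW : W.IsSymm)
    (A : Matrix (Fin m) (Fin n) ℝ)
    (x ν : Fin n → ℝ)
    (hx : ∀ i, 0 ≤ x i) (hν : ∀ i, 0 ≤ ν i)
    (hcomp : ∀ i, x i * ν i = 0)
    (hstrict : ∀ i, 0 < x i + ν i)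
    (hLICQ : LinearIndependent ℝ
      (Sum.elim (fun k : Fin m => A k)
        (fun i : {i : Fin n // x i = 0} => (Pi.single (i : Fin n) 1 : Fin n → ℝ))))
    (hSOSC : ∀ h : Fin n → ℝ, h ≠ 0 → A *ᵥ h = 0 → (∀ i, x i = 0 → h i = 0) →
      0 < h ⬝ᵥ (W *ᵥ h)) :
    IsUnit
      (Matrix.fromBlocks W
        (Matrix.fromCols Aᵀ (-(1 : Matrix (Fin n) (Fin n) ℝ)))
        (Matrix.fromRows A (Matrix.diagonal ν))
        (Matrix.fromBlocks 0 0 0 (Matrix.diagonal x))) := by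
  classical
  rw [Matrix.isUnit_iff_isUnit_det, isUnit_iff_ne_zero]
  intro hdet
  obtain ⟨v, hv0, hMv⟩ := Matrix.exists_mulVec_eq_zero_iff.mpr hdet
  set h : Fin n → ℝ := fun i => v (Sum.inl i) with hhdef
  set lam : Fin m → ℝ := fun k => v (Sum.inr (Sum.inl k)) with hlamdef
  set w : Fin n → ℝ := fun i => v (Sum.inr (Sum.inr i)) with hwdef
  have hcl : (v ∘ Sum.inl) = h := rfl
  have hy : (v ∘ Sum.inr) = Sum.elim lam w := by
    funext j; cases j <;> rfl
  rw [Matrix.fromBlocks_mulVec, hcl, hy] at hMv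
  have e1 : ∀ i, (W *ᵥ h) i + ((Aᵀ *ᵥ lam) i - w i) = 0 := by
    intro i
    have := congrFun hMv (Sum.inl i)
    simpa [Matrix.fromCols_mulVec_sumElim, Matrix.neg_mulVec, Matrix.one_mulVec,
      sub_eq_add_neg] using this
  have e2 : A *ᵥ h = 0 := by
    funext k
    have := congrFun hMv (Sum.inr (Sum.inl k))
    simpa [Matrix.fromRows_mulVec, Matrix.fromBlocks_mulVec] using this
  have e3 : ∀ i, ν i * h i + x i * w i = 0 := by
    intro i
    have := congrFun hMv (Sum.inr (Sum.inr i))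
    simpa [Matrix.fromRows_mulVec, Matrix.fromBlocks_mulVec, Matrix.mulVec_diagonal] using this
  have hdich : ∀ i, (x i = 0 ∧ 0 < ν i) ∨ (0 < x i ∧ ν i = 0) := by
    intro i
    rcases eq_or_lt_of_le (hx i) with hx0 | hx0
    · left
      refine ⟨hx0.symm, ?_⟩
      have := hstrict i
      rw [← hx0] at this
      simpa using this
    · right
      refine ⟨hx0, ?_⟩
      have := hcomp i
      exact (mul_eq_zero.mp this).resolve_left (ne_of_gt hx0)
  have hact : ∀ i, x i = 0 → h i = 0 := by
    intro i hxi
    have h3 := e3 i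
    rw [hxi, zero_mul, add_zero] at h3
    rcases hdich i with ⟨_, hνi⟩ | ⟨hxi', _⟩
    · exact (mul_eq_zero.mp h3).resolve_left (ne_of_gt hνi)
    · exact absurd hxi hxi'.ne'
  have hinact : ∀ i, 0 < x i → w i = 0 := by
    intro i hxi
    have h3 := e3 i
    have hνi : ν i = 0 :=
      ((hdich i).resolve_left (fun hc => hxi.ne' hc.1)).2
    rw [hνi, zero_mul, zero_add] at h3
    exact (mul_eq_zero.mp h3).resolve_left (ne_of_gt hxi)
  have hWh : h ⬝ᵥ (W *ᵥ h) = 0 := by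
    have hWe : W *ᵥ h = w - Aᵀ *ᵥ lam := by
      funext i
      have := e1 i
      simp only [Pi.sub_apply]
      linarith
    have h1 : h ⬝ᵥ w = 0 := by
      apply Finset.sum_eq_zero
      intro i _
      rcases hdich i with ⟨hxi, _⟩ | ⟨hxi, _⟩
      · rw [hact i hxi]; ring
      · rw [hinact i hxi]; ring
    have h2 : h ⬝ᵥ (Aᵀ *ᵥ lam) = 0 := by
      rw [Matrix.dotProduct_mulVec, Matrix.vecMul_transpose, e2]
      simp
    rw [hWe, dotProduct_sub, h1, h2, sub_zero]
  have h0 : h = 0 := by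
    by_contra hne
    exact absurd hWh (ne_of_gt (hSOSC h hne e2 hact))
  have hAw : ∀ j, (Aᵀ *ᵥ lam) j = w j := by
    intro j
    have := e1 j
    rw [h0, Matrix.mulVec_zero] at this
    simp only [Pi.zero_apply] at this
    linarith
  have key := Fintype.linearIndependent_iff.mp hLICQ
    (Sum.elim lam (fun i : {i : Fin n // x i = 0} => -w (i : Fin n)))
  have hsum : ∑ j, Sum.elim lam (fun i : {i : Fin n // x i = 0} => -w (i : Fin n)) j •
      Sum.elim (fun k : Fin m => A k)
        (fun i : {i : Fin n // x i = 0} => (Pi.single (i : Fin n) 1 : Fin n → ℝ)) j = 0 := by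
    rw [Fintype.sum_sum_type]
    funext j
    simp only [Sum.elim_inl, Sum.elim_inr, Pi.add_apply, Finset.sum_apply,
      Pi.smul_apply, smul_eq_mul, Pi.zero_apply]
    have hA : ∑ k, lam k * A k j = w j := by
      rw [← hAw j]
      simp [Matrix.mulVec, dotProduct, Matrix.transpose_apply, mul_comm]
    rw [hA]
    by_cases hxj : x j = 0
    · have : ∑ i : {i : Fin n // x i = 0}, -w (i : Fin n) * (Pi.single (i : Fin n) 1 : Fin n → ℝ) j
          = -w j := by
        rw [Finset.sum_eq_single (⟨j, hxj⟩ : {i : Fin n // x i = 0})]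
        · simp
        · intro b _ hb
          have hbj : (b : Fin n) ≠ j := fun e => hb (Subtype.ext e)
          simp [Pi.single_apply, hbj.symm]
        · simp
      rw [this]; ring
    · have hwj : w j = 0 := hinact j (lt_of_le_of_ne (hx j) (Ne.symm hxj))
      have : ∑ i : {i : Fin n // x i = 0}, -w (i : Fin n) * (Pi.single (i : Fin n) 1 : Fin n → ℝ) j
          = 0 := by
        apply Finset.sum_eq_zero
        intro b _
        have hbj : j ≠ (b : Fin n) := fun e => hxj (e ▸ b.2)
        simp [Pi.single_apply, hbj]
      rw [this, hwj]; ring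
  have hcoef := key hsum
  have hlam0 : ∀ k, lam k = 0 := fun k => hcoef (Sum.inl k)
  have hw0 : ∀ i, w i = 0 := by
    intro i
    by_cases hxi : x i = 0
    · have := hcoef (Sum.inr ⟨i, hxi⟩)
      simpa using this
    · exact hinact i (lt_of_le_of_ne (hx i) (Ne.symm hxi))
  apply hv0
  funext j
  rcases j with i | (k | i)
  · exact congrFun h0 i
  · exact hlam0 k
  · exact hw0 i
end

section
/- Let f : ℝⁿ × ℝˡ → ℝ and c : ℝⁿ × ℝˡ → ℝᵐ be twice continuously differentiable, and suppose (x*, λ*, ν*) ∈ ℝⁿ × ℝᵐ × ℝⁿ satisfies, at parameter p₀ ∈ ℝˡ, the KKT system: ∇ₓf(x*;p₀) + (∇ₓc(x*;p₀))ᵀλ* − ν* = 0, c(x*;p₀) = 0, x* ≥ 0, ν* ≥ 0, and x*ᵢν*ᵢ = 0 for all i. Assume strict complementarity (x*ᵢ + ν*ᵢ > 0 for all i), LICQ (the rows of ∇ₓc(x*;p₀) together with the unit vectors {eᵢ : x*ᵢ = 0} are linearly independent), and the reduced second-order condition (hᵀ∇²ₓₓL(x*,λ*,ν*;p₀)h >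 0 for all nonzero h with ∇ₓc(x*;p₀)h = 0 and hᵢ = 0 whenever x*ᵢ = 0). Then there exist an open neighborhood U of p₀ and continuously differentiable maps x : U → ℝⁿ, λ : U → ℝᵐ, ν : U → ℝⁿ with (x(p₀), λ(p₀), ν(p₀)) = (x*, λ*, ν*) such that for every p ∈ U: ∇ₓf(x(p);p) + (∇ₓc(x(p);p))ᵀλ(p) − ν(p) = 0, c(x(p);p) = 0, x(p) ≥ 0, ν(p) ≥ 0, and xᵢ(p)νᵢ(p) = 0 for all i. -/
open Matrix

/-- The Jacobian matrix of a map `f : ℝⁿ → ℝᵐ` at a point `x`, with entry `(i, j)`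
given by `∂fᵢ/∂xⱼ`. -/
noncomputable def jacobian {n m : ℕ} (f : (Fin n → ℝ) → (Fin m → ℝ)) (x : Fin n → ℝ) :
    Matrix (Fin m) (Fin n) ℝ :=
  Matrix.of fun i j => fderiv ℝ f x (Pi.single j 1) i

/-- The gradient of a scalar function `φ : ℝⁿ → ℝ` at a point `x`. -/
noncomputable def grad {n : ℕ} (φ : (Fin n → ℝ) → ℝ) (x : Fin n → ℝ) : Fin n → ℝ :=
  fun j => fderiv ℝ φ x (Pi.single j 1)

/-- The Hessian matrix of a scalar function `φ : ℝⁿ → ℝ` at a point `x`. -/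
noncomputable def hessian {n : ℕ} (φ : (Fin n → ℝ) → ℝ) (x : Fin n → ℝ) :
    Matrix (Fin n) (Fin n) ℝ :=
  Matrix.of fun i j => fderiv ℝ (fun z => fderiv ℝ φ z (Pi.single j 1)) x (Pi.single i 1)

/-! ### Auxiliary lemmas for Fiacco's sensitivity theorem -/

private abbrev XP (n l : ℕ) := (Fin n → ℝ) × (Fin l → ℝ)
private abbrev ZSp (n m : ℕ) := (Fin n → ℝ) × (Fin m → ℝ) × (Fin n → ℝ)
private abbrev QSp (n m l : ℕ) := ZSp n m × (Fin l → ℝ)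

private lemma fderiv_partial {E F G : Type*} [NormedAddCommGroup E] [NormedSpace ℝ E]
    [NormedAddCommGroup F] [NormedSpace ℝ F] [NormedAddCommGroup G] [NormedSpace ℝ G]
    {φ : E × F → G} {x : E} {p : F} (hφ : DifferentiableAt ℝ φ (x, p)) (v : E) :
    fderiv ℝ (fun z => φ (z, p)) x v = fderiv ℝ φ (x, p) (v, 0) := by
  have h : HasFDerivAt (fun z => φ (z, p))
      ((fderiv ℝ φ (x, p)).comp ((ContinuousLinearMap.id ℝ E).prod 0)) x :=
    hφ.hasFDerivAt.comp x ((hasFDerivAt_id x).prodMk (hasFDerivAt_const p x))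
  rw [h.fderiv]
  simp

private lemma pair_expand {n l : ℕ} (h : Fin n → ℝ) :
    ((h, 0) : XP n l) = ∑ j, h j • ((Pi.single j 1, 0) : XP n l) := by
  refine Prod.ext ?_ ?_
  · simp only [Prod.fst_sum, Prod.smul_mk]
    funext i
    simp [Finset.sum_apply, Pi.single_apply]
  · simp [Prod.snd_sum]

private lemma clm1_expand {n l : ℕ} {F : Type*} [NormedAddCommGroup F] [NormedSpace ℝ F]
    (B : XP n l →L[ℝ] F) (h : Fin n → ℝ) :
    B ((h, 0) : XP n l) = ∑ j, h j • B (Pi.single j 1, 0) := by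
  rw [pair_expand h, map_sum]
  exact Finset.sum_congr rfl fun j _ => by rw [B.map_smul]

private lemma clm2_expand {n l : ℕ} {F : Type*} [NormedAddCommGroup F] [NormedSpace ℝ F]
    (B : XP n l →L[ℝ] XP n l →L[ℝ] F) (h g : Fin n → ℝ) :
    B ((h, 0) : XP n l) ((g, 0) : XP n l)
      = ∑ i, ∑ j, (h i * g j) • B (Pi.single i 1, 0) (Pi.single j 1, 0) := by
  rw [clm1_expand B h, ContinuousLinearMap.sum_apply]
  refine Finset.sum_congr rfl fun i _ => ?_
  rw [ContinuousLinearMap.smul_apply, clm1_expand (B (Pi.single i 1, 0)) g, Finset.smul_sum]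
  refine Finset.sum_congr rfl fun j _ => ?_
  rw [smul_smul]

private lemma lag_fderiv {n m l : ℕ}
    {f : (Fin n → ℝ) → (Fin l → ℝ) → ℝ}
    {c : (Fin n → ℝ) → (Fin l → ℝ) → (Fin m → ℝ)}
    (hf : Differentiable ℝ (fun w : XP n l => f w.1 w.2))
    (hc : Differentiable ℝ (fun w : XP n l => c w.1 w.2))
    (lam : Fin m → ℝ) (nu : Fin n → ℝ) (p₀ : Fin l → ℝ) (z : Fin n → ℝ) (v : Fin n → ℝ) :
    fderiv ℝ (fun z => f z p₀ + ∑ k, lam k * c z p₀ k - ∑ i, nu i * z i) z v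
      = fderiv ℝ (fun w : XP n l => f w.1 w.2) (z, p₀) (v, 0)
        + ∑ k, lam k * fderiv ℝ (fun w : XP n l => c w.1 w.2) (z, p₀) (v, 0) k
        - ∑ i, nu i * v i := by
  have hinl : HasFDerivAt (fun z : Fin n → ℝ => ((z, p₀) : XP n l))
      ((ContinuousLinearMap.id ℝ (Fin n → ℝ)).prod 0) z :=
    (hasFDerivAt_id z).prodMk (hasFDerivAt_const p₀ z)
  have t1 : HasFDerivAt (fun z => f z p₀)
      ((fderiv ℝ (fun w : XP n l => f w.1 w.2) (z, p₀)).comp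
        ((ContinuousLinearMap.id ℝ (Fin n → ℝ)).prod 0)) z :=
    by have := (hf (z, p₀)).hasFDerivAt.comp z hinl; exact this
  have tc : HasFDerivAt (fun z => c z p₀)
      ((fderiv ℝ (fun w : XP n l => c w.1 w.2) (z, p₀)).comp
        ((ContinuousLinearMap.id ℝ (Fin n → ℝ)).prod 0)) z :=
    by have := (hc (z, p₀)).hasFDerivAt.comp z hinl; exact this
  have t2 : HasFDerivAt (fun z : Fin n → ℝ => ∑ k, lam k * c z p₀ k)
      (∑ k, lam k • ((ContinuousLinearMap.proj k).comp
        ((fderiv ℝ (fun w : XP n l => c w.1 w.2) (z, p₀)).comp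
          ((ContinuousLinearMap.id ℝ (Fin n → ℝ)).prod 0)))) z :=
    HasFDerivAt.fun_sum fun k _ => ((hasFDerivAt_pi'.1 tc k).const_mul (lam k))
  have t3 : HasFDerivAt (fun z : Fin n → ℝ => ∑ i, nu i * z i)
      (∑ i, nu i • (ContinuousLinearMap.proj i : (Fin n → ℝ) →L[ℝ] ℝ)) z :=
    HasFDerivAt.fun_sum fun i _ => ((hasFDerivAt_apply i z).const_mul (nu i))
  have hfin : HasFDerivAt (fun z => f z p₀ + ∑ k, lam k * c z p₀ k - ∑ i, nu i * z i)
      _ z := (t1.add t2).sub t3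
  rw [hfin.fderiv]
  simp [ContinuousLinearMap.sum_apply]

private lemma hess_bridge {n m l : ℕ}
    {f : (Fin n → ℝ) → (Fin l → ℝ) → ℝ}
    {c : (Fin n → ℝ) → (Fin l → ℝ) → (Fin m → ℝ)}
    (hf : ContDiff ℝ 2 (fun w : XP n l => f w.1 w.2))
    (hc : ContDiff ℝ 2 (fun w : XP n l => c w.1 w.2))
    (lam : Fin m → ℝ) (nu : Fin n → ℝ) (p₀ : Fin l → ℝ) (xstar : Fin n → ℝ) (i j : Fin n) :
    hessian (fun z => f z p₀ + ∑ k, lam k * c z p₀ k - ∑ i, nu i * z i) xstar i j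
      = fderiv ℝ (fderiv ℝ (fun w : XP n l => f w.1 w.2)) (xstar, p₀)
          (Pi.single i 1, 0) (Pi.single j 1, 0)
        + ∑ k, lam k * fderiv ℝ (fderiv ℝ (fun w : XP n l => c w.1 w.2))
            (xstar, p₀) (Pi.single i 1, 0) (Pi.single j 1, 0) k := by
  have hfd : Differentiable ℝ (fun w : XP n l => f w.1 w.2) := hf.differentiable two_ne_zero
  have hcd : Differentiable ℝ (fun w : XP n l => c w.1 w.2) := hc.differentiable two_ne_zero
  have hDf : ContDiff ℝ 1 (fderiv ℝ (fun w : XP n l => f w.1 w.2)) :=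
    hf.fderiv_right (m := 1) (by norm_num)
  have hDc : ContDiff ℝ 1 (fderiv ℝ (fun w : XP n l => c w.1 w.2)) :=
    hc.fderiv_right (m := 1) (by norm_num)
  have hfun : (fun z => fderiv ℝ
        (fun z => f z p₀ + ∑ k, lam k * c z p₀ k - ∑ i, nu i * z i) z (Pi.single j 1))
      = fun z => fderiv ℝ (fun w : XP n l => f w.1 w.2) (z, p₀)
            (Pi.single j 1, 0)
          + ∑ k, lam k * fderiv ℝ (fun w : XP n l => c w.1 w.2) (z, p₀)
              (Pi.single j 1, 0) k
          - ∑ i', nu i' * (Pi.single j 1 : Fin n → ℝ) i' :=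
    funext fun z => lag_fderiv hfd hcd lam nu p₀ z _
  show fderiv ℝ (fun z => fderiv ℝ
      (fun z => f z p₀ + ∑ k, lam k * c z p₀ k - ∑ i, nu i * z i) z (Pi.single j 1))
      xstar (Pi.single i 1) = _
  rw [hfun]
  have hinl : HasFDerivAt (fun z : Fin n → ℝ => ((z, p₀) : XP n l))
      ((ContinuousLinearMap.id ℝ (Fin n → ℝ)).prod 0) xstar :=
    (hasFDerivAt_id xstar).prodMk (hasFDerivAt_const p₀ xstar)
  have s1 : HasFDerivAt
      (fun z : Fin n → ℝ => fderiv ℝ (fun w : XP n l => f w.1 w.2) (z, p₀)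
        (Pi.single j 1, 0))
      ((ContinuousLinearMap.apply ℝ ℝ ((Pi.single j 1 : Fin n → ℝ), (0 : Fin l → ℝ))).comp
        ((fderiv ℝ (fderiv ℝ (fun w : XP n l => f w.1 w.2)) (xstar, p₀)).comp
          ((ContinuousLinearMap.id ℝ (Fin n → ℝ)).prod 0))) xstar :=
    (ContinuousLinearMap.apply ℝ ℝ ((Pi.single j 1 : Fin n → ℝ), (0 : Fin l → ℝ))).hasFDerivAt.comp xstar
      (((hDf.differentiable one_ne_zero (xstar, p₀)).hasFDerivAt).comp xstar hinl)
  have sc : HasFDerivAt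
      (fun z : Fin n → ℝ => fderiv ℝ (fun w : XP n l => c w.1 w.2) (z, p₀)
        (Pi.single j 1, 0))
      ((ContinuousLinearMap.apply ℝ (Fin m → ℝ)
          ((Pi.single j 1 : Fin n → ℝ), (0 : Fin l → ℝ))).comp
        ((fderiv ℝ (fderiv ℝ (fun w : XP n l => c w.1 w.2)) (xstar, p₀)).comp
          ((ContinuousLinearMap.id ℝ (Fin n → ℝ)).prod 0))) xstar :=
    (ContinuousLinearMap.apply ℝ (Fin m → ℝ) ((Pi.single j 1 : Fin n → ℝ), (0 : Fin l → ℝ))).hasFDerivAt.comp xstar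
      (((hDc.differentiable one_ne_zero (xstar, p₀)).hasFDerivAt).comp xstar hinl)
  have s2 : HasFDerivAt
      (fun z : Fin n → ℝ => ∑ k, lam k *
        fderiv ℝ (fun w : XP n l => c w.1 w.2) (z, p₀) (Pi.single j 1, 0) k)
      _ xstar :=
    HasFDerivAt.fun_sum fun k _ => ((hasFDerivAt_pi'.1 sc k).const_mul (lam k))
  have hfin : HasFDerivAt
      (fun z : Fin n → ℝ =>
        fderiv ℝ (fun w : XP n l => f w.1 w.2) (z, p₀) (Pi.single j 1, 0)
        + ∑ k, lam k * fderiv ℝ (fun w : XP n l => c w.1 w.2) (z, p₀)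
            (Pi.single j 1, 0) k
        - ∑ i', nu i' * (Pi.single j 1 : Fin n → ℝ) i') _ xstar :=
    (s1.add s2).sub (hasFDerivAt_const _ _)
  rw [hfin.fderiv]
  simp [ContinuousLinearMap.sum_apply]

set_option maxHeartbeats 2000000 in
/-- Fiacco's sensitivity theorem: under LICQ, strict complementarity and second-order
sufficiency, the primal-dual KKT solution of the parametric NLP
`min f(x;p) s.t. c(x;p) = 0, x ≥ 0` is locally a continuously differentiable function
of the parameter `p`. -/
theorem fiacco_sensitivity {n m l : ℕ}
    (f : (Fin n → ℝ) → (Fin l → ℝ) → ℝ)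
    (c : (Fin n → ℝ) → (Fin l → ℝ) → (Fin m → ℝ))
    (hf : ContDiff ℝ 2 (fun xp : (Fin n → ℝ) × (Fin l → ℝ) => f xp.1 xp.2))
    (hc : ContDiff ℝ 2 (fun xp : (Fin n → ℝ) × (Fin l → ℝ) => c xp.1 xp.2))
    (xstar : Fin n → ℝ) (lamstar : Fin m → ℝ) (nustar : Fin n → ℝ) (p₀ : Fin l → ℝ)
    (hstat : grad (fun z => f z p₀) xstar
        + (jacobian (fun z => c z p₀) xstar)ᵀ *ᵥ lamstar - nustar = 0)
    (hfeas : c xstar p₀ = 0)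
    (hx : ∀ i, 0 ≤ xstar i) (hnu : ∀ i, 0 ≤ nustar i)
    (hcomp : ∀ i, xstar i * nustar i = 0)
    (hstrict : ∀ i, 0 < xstar i + nustar i)
    (hLICQ : LinearIndependent ℝ
      (Sum.elim (fun k : Fin m => (jacobian (fun z => c z p₀) xstar) k)
        (fun i : {i : Fin n // xstar i = 0} => (Pi.single (i : Fin n) 1 : Fin n → ℝ))))
    (hSOSC : ∀ h : Fin n → ℝ, h ≠ 0 →
        (jacobian (fun z => c z p₀) xstar) *ᵥ h = 0 →
        (∀ i, xstar i = 0 → h i = 0) →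
        0 < h ⬝ᵥ ((hessian
          (fun z => f z p₀ + ∑ k, lamstar k * c z p₀ k - ∑ i, nustar i * z i)
          xstar) *ᵥ h)) :
    ∃ (U : Set (Fin l → ℝ)) (x : (Fin l → ℝ) → Fin n → ℝ)
      (lam : (Fin l → ℝ) → Fin m → ℝ) (nu : (Fin l → ℝ) → Fin n → ℝ),
      IsOpen U ∧ p₀ ∈ U ∧
      ContDiffOn ℝ 1 x U ∧ ContDiffOn ℝ 1 lam U ∧ ContDiffOn ℝ 1 nu U ∧
      x p₀ = xstar ∧ lam p₀ = lamstar ∧ nu p₀ = nustar ∧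
      ∀ p ∈ U,
        grad (fun z => f z p) (x p)
          + (jacobian (fun z => c z p) (x p))ᵀ *ᵥ (lam p) - nu p = 0 ∧
        c (x p) p = 0 ∧ (∀ i, 0 ≤ x p i) ∧ (∀ i, 0 ≤ nu p i) ∧
        (∀ i, x p i * nu p i = 0) := by
  classical
  have hfd : Differentiable ℝ (fun w : XP n l => f w.1 w.2) := hf.differentiable two_ne_zero
  have hcd : Differentiable ℝ (fun w : XP n l => c w.1 w.2) := hc.differentiable two_ne_zero
  have hDf : ContDiff ℝ 1 (fderiv ℝ (fun w : XP n l => f w.1 w.2)) :=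
    hf.fderiv_right (m := 1) (by norm_num)
  have hDc : ContDiff ℝ 1 (fderiv ℝ (fun w : XP n l => c w.1 w.2)) :=
    hc.fderiv_right (m := 1) (by norm_num)
  set Df : XP n l → (XP n l →L[ℝ] ℝ) := fderiv ℝ (fun w : XP n l => f w.1 w.2) with hDfdef
  set Dc : XP n l → (XP n l →L[ℝ] (Fin m → ℝ)) := fderiv ℝ (fun w : XP n l => c w.1 w.2)
    with hDcdef
  set S : XP n l →L[ℝ] (XP n l →L[ℝ] ℝ) :=
    fderiv ℝ (fderiv ℝ (fun w : XP n l => f w.1 w.2)) (xstar, p₀) with hSdef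
  set T : XP n l →L[ℝ] (XP n l →L[ℝ] (Fin m → ℝ)) :=
    fderiv ℝ (fderiv ℝ (fun w : XP n l => c w.1 w.2)) (xstar, p₀) with hTdef
  -- bridges to the statement-level `grad` and `jacobian`
  have hgrad : ∀ (x : Fin n → ℝ) (p : Fin l → ℝ) (j : Fin n),
      grad (fun z => f z p) x j = Df (x, p) (Pi.single j 1, 0) := fun x p j =>
    fderiv_partial (hfd (x, p)) _
  have hjacb : ∀ (x : Fin n → ℝ) (p : Fin l → ℝ) (k : Fin m) (j : Fin n),
      jacobian (fun z => c z p) x k j = Dc (x, p) (Pi.single j 1, 0) k := by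
    intro x p k j
    show fderiv ℝ (fun z => c z p) x (Pi.single j 1) k = _
    rw [fderiv_partial (hcd (x, p))]
  have heq : ∀ (x : Fin n → ℝ) (p : Fin l → ℝ) (lam : Fin m → ℝ) (nu : Fin n → ℝ),
      grad (fun z => f z p) x + (jacobian (fun z => c z p) x)ᵀ *ᵥ lam - nu
        = fun j => Df (x, p) (Pi.single j 1, 0)
            + ∑ k, lam k * Dc (x, p) (Pi.single j 1, 0) k - nu j := by
    intro x p lam nu
    funext j
    simp only [Pi.add_apply, Pi.sub_apply, Matrix.mulVec, dotProduct,
      Matrix.transpose_apply, hgrad x p j]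
    congr 1
    congr 1
    exact Finset.sum_congr rfl fun k _ => by rw [hjacb x p k j, mul_comm]
  -- the KKT map and its extended system
  set F : QSp n m l → ZSp n m := fun q =>
    (fun j => Df (q.1.1, q.2) (Pi.single j 1, 0)
        + ∑ k, q.1.2.1 k * Dc (q.1.1, q.2) (Pi.single j 1, 0) k - q.1.2.2 j,
     (fun w : XP n l => c w.1 w.2) (q.1.1, q.2),
     fun i => q.1.1 i * q.1.2.2 i) with hFdef
  set Φ : QSp n m l → QSp n m l := fun q => (F q, q.2) with hΦdef
  set q₀ : QSp n m l := ((xstar, lamstar, nustar), p₀) with hq₀def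
  -- smoothness of Φ
  have hσs : ContDiff ℝ 1 (fun q : QSp n m l => ((q.1.1, q.2) : XP n l)) :=
    (contDiff_fst.comp contDiff_fst).prodMk contDiff_snd
  have hΦs : ContDiff ℝ 1 Φ := by
    refine ContDiff.prodMk (ContDiff.prodMk ?_ (ContDiff.prodMk ?_ ?_)) contDiff_snd
    · refine contDiff_pi.mpr fun j => ContDiff.sub (ContDiff.add ?_ ?_) ?_
      · exact (hDf.comp hσs).clm_apply contDiff_const
      · refine ContDiff.sum fun k _ => ContDiff.mul ?_ ?_
        · exact contDiff_pi.1 ((contDiff_fst.comp (contDiff_snd.comp contDiff_fst))) k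
        · exact contDiff_pi.1 ((hDc.comp hσs).clm_apply contDiff_const) k
      · exact contDiff_pi.1 (contDiff_snd.comp (contDiff_snd.comp contDiff_fst)) j
    · exact (hc.of_le one_le_two).comp hσs
    · refine contDiff_pi.mpr fun i => ContDiff.mul ?_ ?_
      · exact contDiff_pi.1 (contDiff_fst.comp contDiff_fst) i
      · exact contDiff_pi.1 (contDiff_snd.comp (contDiff_snd.comp contDiff_fst)) i
  -- the derivative of Φ at q₀
  have hex : ∃ L : QSp n m l →L[ℝ] QSp n m l, HasFDerivAt Φ L q₀ ∧
      ∀ v : QSp n m l, L v =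
        ((fun j => S (v.1.1, v.2) (Pi.single j 1, 0)
            + ∑ k, (lamstar k * T (v.1.1, v.2) (Pi.single j 1, 0) k
                + Dc (xstar, p₀) (Pi.single j 1, 0) k * v.1.2.1 k) - v.1.2.2 j,
          Dc (xstar, p₀) (v.1.1, v.2),
          fun i => xstar i * v.1.2.2 i + nustar i * v.1.1 i), v.2) := by
    let σCLM : QSp n m l →L[ℝ] XP n l :=
      ((ContinuousLinearMap.fst ℝ (Fin n → ℝ) ((Fin m → ℝ) × (Fin n → ℝ))).comp
        (ContinuousLinearMap.fst ℝ (ZSp n m) (Fin l → ℝ))).prod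
      (ContinuousLinearMap.snd ℝ (ZSp n m) (Fin l → ℝ))
    let πlam : QSp n m l →L[ℝ] (Fin m → ℝ) :=
      (ContinuousLinearMap.fst ℝ (Fin m → ℝ) (Fin n → ℝ)).comp
        ((ContinuousLinearMap.snd ℝ (Fin n → ℝ) ((Fin m → ℝ) × (Fin n → ℝ))).comp
          (ContinuousLinearMap.fst ℝ (ZSp n m) (Fin l → ℝ)))
    let πnu : QSp n m l →L[ℝ] (Fin n → ℝ) :=
      (ContinuousLinearMap.snd ℝ (Fin m → ℝ) (Fin n → ℝ)).comp
        ((ContinuousLinearMap.snd ℝ (Fin n → ℝ) ((Fin m → ℝ) × (Fin n → ℝ))).comp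
          (ContinuousLinearMap.fst ℝ (ZSp n m) (Fin l → ℝ)))
    let πx : QSp n m l →L[ℝ] (Fin n → ℝ) :=
      (ContinuousLinearMap.fst ℝ (Fin n → ℝ) ((Fin m → ℝ) × (Fin n → ℝ))).comp
        (ContinuousLinearMap.fst ℝ (ZSp n m) (Fin l → ℝ))
    have hσfd : HasFDerivAt (fun q : QSp n m l => ((q.1.1, q.2) : XP n l)) σCLM q₀ :=
      σCLM.hasFDerivAt
    have hDffd : HasFDerivAt Df S (xstar, p₀) :=
      (hDf.differentiable one_ne_zero (xstar, p₀)).hasFDerivAt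
    have hDcfd : HasFDerivAt Dc T (xstar, p₀) :=
      (hDc.differentiable one_ne_zero (xstar, p₀)).hasFDerivAt
    have elam : ∀ k : Fin m, HasFDerivAt (fun q : QSp n m l => q.1.2.1 k)
        ((ContinuousLinearMap.proj k).comp πlam) q₀ :=
      fun k => ((ContinuousLinearMap.proj k).comp πlam).hasFDerivAt
    have enu : ∀ i : Fin n, HasFDerivAt (fun q : QSp n m l => q.1.2.2 i)
        ((ContinuousLinearMap.proj i).comp πnu) q₀ :=
      fun i => ((ContinuousLinearMap.proj i).comp πnu).hasFDerivAt
    have echi : ∀ i : Fin n, HasFDerivAt (fun q : QSp n m l => q.1.1 i)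
        ((ContinuousLinearMap.proj i).comp πx) q₀ :=
      fun i => ((ContinuousLinearMap.proj i).comp πx).hasFDerivAt
    have hexj : ∀ j : Fin n, ∃ L : QSp n m l →L[ℝ] ℝ,
        HasFDerivAt (fun q : QSp n m l => Df (q.1.1, q.2) (Pi.single j 1, 0)
          + ∑ k, q.1.2.1 k * Dc (q.1.1, q.2) (Pi.single j 1, 0) k - q.1.2.2 j) L q₀ ∧
        ∀ v : QSp n m l, L v = S (v.1.1, v.2) (Pi.single j 1, 0)
          + ∑ k, (lamstar k * T (v.1.1, v.2) (Pi.single j 1, 0) k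
              + Dc (xstar, p₀) (Pi.single j 1, 0) k * v.1.2.1 k) - v.1.2.2 j := by
      intro j
      have e1 : HasFDerivAt (fun q : QSp n m l => Df (q.1.1, q.2) (Pi.single j 1, 0))
          ((ContinuousLinearMap.apply ℝ ℝ
            ((Pi.single j 1 : Fin n → ℝ), (0 : Fin l → ℝ))).comp (S.comp σCLM)) q₀ :=
        (ContinuousLinearMap.apply ℝ ℝ
          ((Pi.single j 1 : Fin n → ℝ), (0 : Fin l → ℝ))).hasFDerivAt.comp q₀
          (hDffd.comp q₀ hσfd)
      have edc : HasFDerivAt (fun q : QSp n m l => Dc (q.1.1, q.2) (Pi.single j 1, 0))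
          ((ContinuousLinearMap.apply ℝ (Fin m → ℝ)
            ((Pi.single j 1 : Fin n → ℝ), (0 : Fin l → ℝ))).comp (T.comp σCLM)) q₀ :=
        (ContinuousLinearMap.apply ℝ (Fin m → ℝ)
          ((Pi.single j 1 : Fin n → ℝ), (0 : Fin l → ℝ))).hasFDerivAt.comp q₀
          (hDcfd.comp q₀ hσfd)
      have esum : HasFDerivAt (fun q : QSp n m l =>
          ∑ k, q.1.2.1 k * Dc (q.1.1, q.2) (Pi.single j 1, 0) k) _ q₀ :=
        HasFDerivAt.fun_sum fun k _ => (elam k).mul (hasFDerivAt_pi'.1 edc k)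
      refine ⟨_, (e1.add esum).sub (enu j), fun v => ?_⟩
      simp only [hq₀def, ContinuousLinearMap.coe_sub', ContinuousLinearMap.coe_comp',
        Pi.sub_apply, Function.comp_apply, ContinuousLinearMap.add_apply,
        ContinuousLinearMap.sum_apply, ContinuousLinearMap.smul_apply,
        ContinuousLinearMap.apply_apply, ContinuousLinearMap.proj_apply,
        ContinuousLinearMap.prod_apply, ContinuousLinearMap.coe_fst',
        ContinuousLinearMap.coe_snd', smul_eq_mul]
      rfl
    have hex3 : ∀ i : Fin n, ∃ L : QSp n m l →L[ℝ] ℝ,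
        HasFDerivAt (fun q : QSp n m l => q.1.1 i * q.1.2.2 i) L q₀ ∧
        ∀ v : QSp n m l, L v = xstar i * v.1.2.2 i + nustar i * v.1.1 i := by
      intro i
      refine ⟨_, (echi i).mul (enu i), fun v => ?_⟩
      simp only [hq₀def, ContinuousLinearMap.add_apply, ContinuousLinearMap.smul_apply,
        ContinuousLinearMap.coe_comp', Function.comp_apply,
        ContinuousLinearMap.proj_apply, smul_eq_mul]
      rfl
    choose L1 hL1 hL1v using hexj
    choose L3 hL3 hL3v using hex3
    have hF1 : HasFDerivAt (fun q : QSp n m l => fun j : Fin n =>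
        Df (q.1.1, q.2) (Pi.single j 1, 0)
          + ∑ k, q.1.2.1 k * Dc (q.1.1, q.2) (Pi.single j 1, 0) k - q.1.2.2 j)
        (ContinuousLinearMap.pi L1) q₀ := hasFDerivAt_pi.mpr fun j => hL1 j
    have hF3 : HasFDerivAt (fun q : QSp n m l => fun i : Fin n => q.1.1 i * q.1.2.2 i)
        (ContinuousLinearMap.pi L3) q₀ := hasFDerivAt_pi.mpr fun i => hL3 i
    have e2 : HasFDerivAt (fun q : QSp n m l => (fun w : XP n l => c w.1 w.2) (q.1.1, q.2))
        ((Dc (xstar, p₀)).comp σCLM) q₀ :=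
      by have := (hcd (xstar, p₀)).hasFDerivAt.comp q₀ hσfd; exact this
    have hFf : HasFDerivAt F
        ((ContinuousLinearMap.pi L1).prod
          (((Dc (xstar, p₀)).comp σCLM).prod (ContinuousLinearMap.pi L3))) q₀ :=
      hF1.prodMk (e2.prodMk hF3)
    have hΦf : HasFDerivAt Φ
        (((ContinuousLinearMap.pi L1).prod
            (((Dc (xstar, p₀)).comp σCLM).prod (ContinuousLinearMap.pi L3))).prod
          (ContinuousLinearMap.snd ℝ (ZSp n m) (Fin l → ℝ))) q₀ :=
      hFf.prodMk (ContinuousLinearMap.snd ℝ (ZSp n m) (Fin l → ℝ)).hasFDerivAt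
    refine ⟨_, hΦf, fun v => ?_⟩
    refine Prod.ext (Prod.ext ?_ (Prod.ext ?_ ?_)) rfl
    · funext j
      exact hL1v j v
    · rfl
    · funext i
      exact hL3v i v
  obtain ⟨LΦ, hLΦ, hLΦv⟩ := hex
  -- injectivity of the derivative
  have hker : ∀ v : QSp n m l, LΦ v = 0 → v = 0 := by
    intro v hv
    rw [hLΦv v] at hv
    simp only [Prod.mk_eq_zero] at hv
    obtain ⟨⟨hA, hB, hC⟩, h2⟩ := hv
    rw [h2] at hA hB
    -- complementarity consequences
    have hact : ∀ i, xstar i = 0 → v.1.1 i = 0 := by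
      intro i hxi
      have hci := congrFun hC i
      have hnupos : 0 < nustar i := by
        have := hstrict i
        rw [hxi] at this
        simpa using this
      rw [hxi] at hci
      have hz : nustar i * v.1.1 i = 0 := by simpa using hci
      exact (mul_eq_zero.mp hz).resolve_left (ne_of_gt hnupos)
    have hwin : ∀ i, xstar i ≠ 0 → v.1.2.2 i = 0 := by
      intro i hxi
      have hnuz : nustar i = 0 := (mul_eq_zero.mp (hcomp i)).resolve_left hxi
      have hci := congrFun hC i
      rw [hnuz] at hci
      have hz : xstar i * v.1.2.2 i = 0 := by simpa using hci
      exact (mul_eq_zero.mp hz).resolve_left hxi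
    have hE1 : ∀ j, S ((v.1.1, 0) : XP n l) (Pi.single j 1, 0)
        + ∑ k, (lamstar k * T ((v.1.1, 0) : XP n l) (Pi.single j 1, 0) k
            + Dc (xstar, p₀) (Pi.single j 1, 0) k * v.1.2.1 k) - v.1.2.2 j = 0 :=
      fun j => congrFun hA j
    -- the constraint Jacobian kills v.1.1
    have hAh : jacobian (fun z => c z p₀) xstar *ᵥ v.1.1 = 0 := by
      funext k
      show ∑ j, jacobian (fun z => c z p₀) xstar k j * v.1.1 j = (0 : ℝ)
      calc ∑ j, jacobian (fun z => c z p₀) xstar k j * v.1.1 j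
          = ∑ j, v.1.1 j * Dc (xstar, p₀) (Pi.single j 1, 0) k :=
            Finset.sum_congr rfl fun j _ => by rw [hjacb xstar p₀ k j, mul_comm]
        _ = Dc (xstar, p₀) ((v.1.1, 0) : XP n l) k := by
            rw [clm1_expand (Dc (xstar, p₀)) v.1.1]
            simp [Finset.sum_apply]
        _ = 0 := by rw [hB]; rfl
    -- row expansions
    have hSrow : ∑ j, v.1.1 j * S ((v.1.1, 0) : XP n l) (Pi.single j 1, 0)
        = S ((v.1.1, 0) : XP n l) ((v.1.1, 0) : XP n l) := by
      rw [clm1_expand (S ((v.1.1, 0) : XP n l)) v.1.1]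
      simp [smul_eq_mul]
    have hTrow : ∀ k, ∑ j, v.1.1 j * T ((v.1.1, 0) : XP n l) (Pi.single j 1, 0) k
        = T ((v.1.1, 0) : XP n l) ((v.1.1, 0) : XP n l) k := by
      intro k
      rw [clm1_expand (T ((v.1.1, 0) : XP n l)) v.1.1]
      simp [Finset.sum_apply]
    have hDrow : ∀ k, ∑ j, v.1.1 j * Dc (xstar, p₀) (Pi.single j 1, 0) k = 0 := by
      intro k
      calc ∑ j, v.1.1 j * Dc (xstar, p₀) (Pi.single j 1, 0) k
          = Dc (xstar, p₀) ((v.1.1, 0) : XP n l) k := by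
            rw [clm1_expand (Dc (xstar, p₀)) v.1.1]
            simp [Finset.sum_apply]
        _ = 0 := by rw [hB]; rfl
    have hw0sum : ∑ j, v.1.1 j * v.1.2.2 j = 0 := by
      refine Finset.sum_eq_zero fun j _ => ?_
      by_cases hxj : xstar j = 0
      · rw [hact j hxj, zero_mul]
      · rw [hwin j hxj, mul_zero]
    -- v.1.1 = 0 via second-order conditions
    have hh0 : v.1.1 = 0 := by
      by_contra hne
      have hposq := hSOSC v.1.1 hne hAh hact
      have hquad : v.1.1 ⬝ᵥ ((hessian (fun z => f z p₀ + ∑ k, lamstar k * c z p₀ k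
            - ∑ i, nustar i * z i) xstar) *ᵥ v.1.1)
          = S ((v.1.1, 0) : XP n l) ((v.1.1, 0) : XP n l)
            + ∑ k, lamstar k * T ((v.1.1, 0) : XP n l) ((v.1.1, 0) : XP n l) k := by
        calc v.1.1 ⬝ᵥ ((hessian (fun z => f z p₀ + ∑ k, lamstar k * c z p₀ k
              - ∑ i, nustar i * z i) xstar) *ᵥ v.1.1)
            = ∑ i, ∑ j, (v.1.1 i * v.1.1 j) * (hessian (fun z => f z p₀
                + ∑ k, lamstar k * c z p₀ k - ∑ i, nustar i * z i) xstar) i j := by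
              simp only [dotProduct, Matrix.mulVec]
              exact Finset.sum_congr rfl fun i _ => by
                rw [Finset.mul_sum]
                exact Finset.sum_congr rfl fun j _ => by ring
          _ = ∑ i, ∑ j, ((v.1.1 i * v.1.1 j) * S (Pi.single i 1, 0) (Pi.single j 1, 0)
                + ∑ k, lamstar k * ((v.1.1 i * v.1.1 j)
                    * T (Pi.single i 1, 0) (Pi.single j 1, 0) k)) := by
              refine Finset.sum_congr rfl fun i _ => Finset.sum_congr rfl fun j _ => ?_
              rw [hess_bridge hf hc lamstar nustar p₀ xstar i j, mul_add, Finset.mul_sum]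
              rw [hSdef, hTdef]
              congr 1
              exact Finset.sum_congr rfl fun k _ => by ring
          _ = (∑ i, ∑ j, (v.1.1 i * v.1.1 j) * S (Pi.single i 1, 0) (Pi.single j 1, 0))
              + ∑ i, ∑ j, ∑ k, lamstar k * ((v.1.1 i * v.1.1 j)
                  * T (Pi.single i 1, 0) (Pi.single j 1, 0) k) := by
              rw [← Finset.sum_add_distrib]
              exact Finset.sum_congr rfl fun i _ => by rw [← Finset.sum_add_distrib]
          _ = S ((v.1.1, 0) : XP n l) ((v.1.1, 0) : XP n l)
              + ∑ k, lamstar k * T ((v.1.1, 0) : XP n l) ((v.1.1, 0) : XP n l) k := by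
              congr 1
              · rw [clm2_expand S v.1.1 v.1.1]
                simp [smul_eq_mul]
              · calc ∑ i, ∑ j, ∑ k, lamstar k * ((v.1.1 i * v.1.1 j)
                      * T (Pi.single i 1, 0) (Pi.single j 1, 0) k)
                    = ∑ i, ∑ k, ∑ j, lamstar k * ((v.1.1 i * v.1.1 j)
                      * T (Pi.single i 1, 0) (Pi.single j 1, 0) k) :=
                      Finset.sum_congr rfl fun i _ => Finset.sum_comm
                  _ = ∑ k, ∑ i, ∑ j, lamstar k * ((v.1.1 i * v.1.1 j)
                      * T (Pi.single i 1, 0) (Pi.single j 1, 0) k) := Finset.sum_comm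
                  _ = ∑ k, lamstar k * T ((v.1.1, 0) : XP n l) ((v.1.1, 0) : XP n l) k := by
                      refine Finset.sum_congr rfl fun k _ => ?_
                      rw [clm2_expand T v.1.1 v.1.1]
                      rw [Finset.sum_apply, Finset.mul_sum]
                      refine Finset.sum_congr rfl fun i _ => ?_
                      rw [Finset.sum_apply, Finset.mul_sum]
                      refine Finset.sum_congr rfl fun j _ => ?_
                      simp [smul_eq_mul]
      have h0 : ∑ j, v.1.1 j * (S ((v.1.1, 0) : XP n l) (Pi.single j 1, 0)
          + ∑ k, (lamstar k * T ((v.1.1, 0) : XP n l) (Pi.single j 1, 0) k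
              + Dc (xstar, p₀) (Pi.single j 1, 0) k * v.1.2.1 k) - v.1.2.2 j) = 0 :=
        Finset.sum_eq_zero fun j _ => by rw [hE1 j, mul_zero]
      have hmid : ∑ j, v.1.1 j * ∑ k, (lamstar k * T ((v.1.1, 0) : XP n l) (Pi.single j 1, 0) k
              + Dc (xstar, p₀) (Pi.single j 1, 0) k * v.1.2.1 k)
          = ∑ k, (lamstar k * (∑ j, v.1.1 j * T ((v.1.1, 0) : XP n l) (Pi.single j 1, 0) k)
              + (∑ j, v.1.1 j * Dc (xstar, p₀) (Pi.single j 1, 0) k) * v.1.2.1 k) := by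
        calc ∑ j, v.1.1 j * ∑ k, (lamstar k * T ((v.1.1, 0) : XP n l) (Pi.single j 1, 0) k
                + Dc (xstar, p₀) (Pi.single j 1, 0) k * v.1.2.1 k)
            = ∑ j, ∑ k, (lamstar k * (v.1.1 j * T ((v.1.1, 0) : XP n l) (Pi.single j 1, 0) k)
                + (v.1.1 j * Dc (xstar, p₀) (Pi.single j 1, 0) k) * v.1.2.1 k) := by
              refine Finset.sum_congr rfl fun j _ => ?_
              rw [Finset.mul_sum]
              exact Finset.sum_congr rfl fun k _ => by ring
          _ = ∑ k, ∑ j, (lamstar k * (v.1.1 j * T ((v.1.1, 0) : XP n l) (Pi.single j 1, 0) k)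
                + (v.1.1 j * Dc (xstar, p₀) (Pi.single j 1, 0) k) * v.1.2.1 k) :=
              Finset.sum_comm
          _ = ∑ k, (lamstar k * (∑ j, v.1.1 j * T ((v.1.1, 0) : XP n l) (Pi.single j 1, 0) k)
              + (∑ j, v.1.1 j * Dc (xstar, p₀) (Pi.single j 1, 0) k) * v.1.2.1 k) := by
              refine Finset.sum_congr rfl fun k _ => ?_
              rw [Finset.sum_add_distrib, ← Finset.mul_sum, ← Finset.sum_mul]
      have hsplit : ∑ j, v.1.1 j * (S ((v.1.1, 0) : XP n l) (Pi.single j 1, 0)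
          + ∑ k, (lamstar k * T ((v.1.1, 0) : XP n l) (Pi.single j 1, 0) k
              + Dc (xstar, p₀) (Pi.single j 1, 0) k * v.1.2.1 k) - v.1.2.2 j)
          = (∑ j, v.1.1 j * S ((v.1.1, 0) : XP n l) (Pi.single j 1, 0))
            + (∑ j, v.1.1 j * ∑ k, (lamstar k * T ((v.1.1, 0) : XP n l) (Pi.single j 1, 0) k
                + Dc (xstar, p₀) (Pi.single j 1, 0) k * v.1.2.1 k))
            - ∑ j, v.1.1 j * v.1.2.2 j := by
        rw [← Finset.sum_add_distrib, ← Finset.sum_sub_distrib]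
        exact Finset.sum_congr rfl fun j _ => by ring
      rw [hsplit, hmid, hSrow, hw0sum] at h0
      have hsum0 : S ((v.1.1, 0) : XP n l) ((v.1.1, 0) : XP n l)
          + ∑ k, lamstar k * T ((v.1.1, 0) : XP n l) ((v.1.1, 0) : XP n l) k = 0 := by
        rw [← h0]
        rw [sub_zero]
        congr 1
        refine Finset.sum_congr rfl fun k _ => ?_
        rw [hTrow k, hDrow k, zero_mul, add_zero]
      rw [hquad, hsum0] at hposq
      exact lt_irrefl 0 hposq
    -- now apply LICQ to determine the remaining components
    have hE1' : ∀ j, ∑ k, Dc (xstar, p₀) (Pi.single j 1, 0) k * v.1.2.1 k = v.1.2.2 j := by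
      intro j
      have hj := hE1 j
      rw [hh0] at hj
      have hz0 : (((0 : Fin n → ℝ), (0 : Fin l → ℝ)) : XP n l) = 0 := rfl
      rw [hz0, map_zero] at hj
      simp only [ContinuousLinearMap.zero_apply, zero_add, mul_zero] at hj
      have := sub_eq_zero.mp hj
      simpa using this
    have hcoefsum : ∑ s : Fin m ⊕ {i : Fin n // xstar i = 0},
        Sum.elim v.1.2.1 (fun i : {i : Fin n // xstar i = 0} => -v.1.2.2 (i : Fin n)) s •
          Sum.elim (fun k : Fin m => (jacobian (fun z => c z p₀) xstar) k)
            (fun i : {i : Fin n // xstar i = 0} => (Pi.single (i : Fin n) 1 : Fin n → ℝ)) s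
          = 0 := by
      rw [Fintype.sum_sum_type]
      funext j
      simp only [Sum.elim_inl, Sum.elim_inr, Pi.add_apply, Finset.sum_apply,
        Pi.smul_apply, smul_eq_mul]
      have hfirst : ∑ k, v.1.2.1 k * jacobian (fun z => c z p₀) xstar k j = v.1.2.2 j := by
        rw [← hE1' j]
        exact Finset.sum_congr rfl fun k _ => by rw [hjacb xstar p₀ k j, mul_comm]
      rw [hfirst]
      by_cases hxj : xstar j = 0
      · have hsecond : ∑ i : {i : Fin n // xstar i = 0},
            (-v.1.2.2 (i : Fin n)) * ((Pi.single (i : Fin n) (1:ℝ) : Fin n → ℝ) j) = -v.1.2.2 j := by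
          rw [Finset.sum_eq_single (⟨j, hxj⟩ : {i : Fin n // xstar i = 0})]
          · simp
          · intro b _ hbne
            have hbj : (b : Fin n) ≠ j := fun hbj => hbne (Subtype.ext hbj)
            simp [Pi.single_apply, hbj]
          · intro habs
            exact absurd (Finset.mem_univ _) habs
        rw [hsecond]
        show v.1.2.2 j + -v.1.2.2 j = (0 : Fin n → ℝ) j
        simp
      · have hsecond : ∑ i : {i : Fin n // xstar i = 0},
            (-v.1.2.2 (i : Fin n)) * ((Pi.single (i : Fin n) (1:ℝ) : Fin n → ℝ) j) = 0 := by
          refine Finset.sum_eq_zero fun b _ => ?_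
          have hbj : (b : Fin n) ≠ j := fun hbj => hxj (hbj ▸ b.2)
          simp [Pi.single_apply, hbj]
        rw [hsecond, hwin j hxj]
        show (0:ℝ) + 0 = (0 : Fin n → ℝ) j
        simp
    have hallz := Fintype.linearIndependent_iff.mp hLICQ
      (Sum.elim v.1.2.1 (fun i : {i : Fin n // xstar i = 0} => -v.1.2.2 (i : Fin n))) hcoefsum
    have hu0 : v.1.2.1 = 0 := funext fun k => hallz (Sum.inl k)
    have hw0 : v.1.2.2 = 0 := by
      funext i
      by_cases hxi : xstar i = 0
      · have := hallz (Sum.inr ⟨i, hxi⟩)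
        simpa using this
      · exact hwin i hxi
    have hvrepr : v = ((v.1.1, v.1.2.1, v.1.2.2), v.2) := rfl
    rw [hvrepr, hh0, hu0, hw0, h2]
    rfl
  have hinj : Function.Injective LΦ := by
    intro a b hab
    have h0 : LΦ (a - b) = 0 := by rw [map_sub, hab, sub_self]
    exact sub_eq_zero.mp (hker _ h0)
  have hbij : Function.Bijective (LΦ : QSp n m l →ₗ[ℝ] QSp n m l) :=
    ⟨hinj, LinearMap.injective_iff_surjective.mp hinj⟩
  set eQ : QSp n m l ≃L[ℝ] QSp n m l :=
    LinearEquiv.toContinuousLinearEquiv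
      (LinearEquiv.ofBijective (LΦ : QSp n m l →ₗ[ℝ] QSp n m l) hbij) with heQdef
  have heQ : (eQ : QSp n m l →L[ℝ] QSp n m l) = LΦ := by
    apply ContinuousLinearMap.ext
    intro v
    rfl
  have hΦfd : HasFDerivAt Φ (eQ : QSp n m l →L[ℝ] QSp n m l) q₀ := by rw [heQ]; exact hLΦ
  have hΦat : ContDiffAt ℝ 1 Φ q₀ := hΦs.contDiffAt
  set g : QSp n m l → QSp n m l := hΦat.localInverse hΦfd one_ne_zero with hgdef
  have hginv : g (Φ q₀) = q₀ := hΦat.localInverse_apply_image hΦfd one_ne_zero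
  have hgcd : ContDiffAt ℝ 1 g (Φ q₀) := hΦat.to_localInverse hΦfd one_ne_zero
  have hri : ∀ᶠ y in nhds (Φ q₀), Φ (g y) = y :=
    (hΦat.hasStrictFDerivAt' hΦfd one_ne_zero).eventually_right_inverse
  -- Φ q₀ = (0, p₀)
  have hF0 : F q₀ = 0 := by
    refine Prod.ext ?_ (Prod.ext ?_ ?_)
    · show (fun j => Df (xstar, p₀) (Pi.single j 1, 0)
          + ∑ k, lamstar k * Dc (xstar, p₀) (Pi.single j 1, 0) k - nustar j) = 0
      rw [← heq xstar p₀ lamstar nustar]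
      exact hstat
    · exact hfeas
    · funext i
      exact hcomp i
  have hΦq₀ : Φ q₀ = ((0 : ZSp n m), p₀) := by
    rw [hΦdef]
    exact Prod.ext hF0 rfl
  set ψ : (Fin l → ℝ) → QSp n m l := fun p => g ((0 : ZSp n m), p) with hψdef
  have hψcd : ContDiffAt ℝ 1 ψ p₀ := by
    have hg' : ContDiffAt ℝ 1 g ((0 : ZSp n m), p₀) := by rw [← hΦq₀]; exact hgcd
    exact hg'.comp p₀ (contDiffAt_const.prodMk contDiffAt_id)
  have hψ0 : ψ p₀ = q₀ := by
    show g ((0 : ZSp n m), p₀) = q₀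
    rw [← hΦq₀]
    exact hginv
  -- neighborhood properties
  have hev1 : ∀ᶠ p in nhds p₀, Φ (ψ p) = ((0 : ZSp n m), p) := by
    have hcont : Filter.Tendsto (fun p : Fin l → ℝ => (((0 : ZSp n m), p) : QSp n m l))
        (nhds p₀) (nhds (Φ q₀)) := by
      rw [hΦq₀]
      exact (continuous_const.prodMk continuous_id).continuousAt
    exact hcont.eventually hri
  have hψc : ContinuousAt ψ p₀ := hψcd.continuousAt
  have hev2 : ∀ᶠ p in nhds p₀, ∀ i,
      (0 < xstar i → 0 < (ψ p).1.1 i) ∧ (0 < nustar i → 0 < (ψ p).1.2.2 i) := by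
    rw [Filter.eventually_all]
    intro i
    have hc1 : ContinuousAt (fun p => (ψ p).1.1 i) p₀ :=
      (((continuous_apply i).comp (continuous_fst.comp continuous_fst)).continuousAt).comp hψc
    have hc2 : ContinuousAt (fun p => (ψ p).1.2.2 i) p₀ :=
      (((continuous_apply i).comp
        (continuous_snd.comp (continuous_snd.comp continuous_fst))).continuousAt).comp hψc
    have e1 : ∀ᶠ p in nhds p₀, 0 < xstar i → 0 < (ψ p).1.1 i := by
      by_cases hpos : 0 < xstar i
      · have hval : (0:ℝ) < (fun p => (ψ p).1.1 i) p₀ := by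
          show (0:ℝ) < (ψ p₀).1.1 i
          rw [hψ0]; exact hpos
        exact (hc1.eventually (lt_mem_nhds hval)).mono fun p hp _ => hp
      · exact Filter.Eventually.of_forall fun p h' => absurd h' hpos
    have e2 : ∀ᶠ p in nhds p₀, 0 < nustar i → 0 < (ψ p).1.2.2 i := by
      by_cases hpos : 0 < nustar i
      · have hval : (0:ℝ) < (fun p => (ψ p).1.2.2 i) p₀ := by
          show (0:ℝ) < (ψ p₀).1.2.2 i
          rw [hψ0]; exact hpos
        exact (hc2.eventually (lt_mem_nhds hval)).mono fun p hp _ => hp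
      · exact Filter.Eventually.of_forall fun p h' => absurd h' hpos
    exact e1.and e2
  obtain ⟨u, hu, hucd⟩ : ∃ u ∈ nhds p₀, ContDiffOn ℝ 1 ψ u :=
    hψcd.contDiffOn le_rfl (by simp)
  have hW : {p | Φ (ψ p) = ((0 : ZSp n m), p) ∧ ∀ i,
      (0 < xstar i → 0 < (ψ p).1.1 i) ∧ (0 < nustar i → 0 < (ψ p).1.2.2 i)} ∈ nhds p₀ :=
    hev1.and hev2
  have hN : u ∩ {p | Φ (ψ p) = ((0 : ZSp n m), p) ∧ ∀ i,
      (0 < xstar i → 0 < (ψ p).1.1 i) ∧ (0 < nustar i → 0 < (ψ p).1.2.2 i)} ∈ nhds p₀ :=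
    Filter.inter_mem hu hW
  refine ⟨interior (u ∩ {p | Φ (ψ p) = ((0 : ZSp n m), p) ∧ ∀ i,
      (0 < xstar i → 0 < (ψ p).1.1 i) ∧ (0 < nustar i → 0 < (ψ p).1.2.2 i)}),
    fun p => (ψ p).1.1, fun p => (ψ p).1.2.1, fun p => (ψ p).1.2.2,
    isOpen_interior, mem_interior_iff_mem_nhds.mpr hN, ?_, ?_, ?_, ?_, ?_, ?_, ?_⟩
  · exact (contDiff_fst.comp contDiff_fst).comp_contDiffOn
      (hucd.mono (interior_subset.trans Set.inter_subset_left))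
  · exact ((contDiff_fst.comp contDiff_snd).comp contDiff_fst).comp_contDiffOn
      (hucd.mono (interior_subset.trans Set.inter_subset_left))
  · exact ((contDiff_snd.comp contDiff_snd).comp contDiff_fst).comp_contDiffOn
      (hucd.mono (interior_subset.trans Set.inter_subset_left))
  · show (ψ p₀).1.1 = xstar
    rw [hψ0]
  · show (ψ p₀).1.2.1 = lamstar
    rw [hψ0]
  · show (ψ p₀).1.2.2 = nustar
    rw [hψ0]
  · intro p hp
    have hp' := interior_subset hp
    obtain ⟨-, hΦp, hsign⟩ := hp'
    -- unpack Φ (ψ p) = (0, p)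
    have hFz : F (ψ p) = 0 := congrArg Prod.fst hΦp
    have hz2 : (ψ p).2 = p := congrArg Prod.snd hΦp
    have hcomp1 : (fun j => Df ((ψ p).1.1, p) (Pi.single j 1, 0)
        + ∑ k, (ψ p).1.2.1 k * Dc ((ψ p).1.1, p) (Pi.single j 1, 0) k - (ψ p).1.2.2 j)
        = 0 := by
      have := congrArg Prod.fst hFz
      rw [hFdef] at this
      simpa [hz2] using this
    have hcomp2 : c ((ψ p).1.1) p = 0 := by
      have := congrArg (fun z : ZSp n m => z.2.1) hFz
      rw [hFdef] at this
      simpa [hz2] using this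
    have hcomp3 : ∀ i, (ψ p).1.1 i * (ψ p).1.2.2 i = 0 := by
      have := congrArg (fun z : ZSp n m => z.2.2) hFz
      rw [hFdef] at this
      exact fun i => congrFun this i
    refine ⟨?_, hcomp2, ?_, ?_, hcomp3⟩
    · rw [heq ((ψ p).1.1) p ((ψ p).1.2.1) ((ψ p).1.2.2)]
      exact hcomp1
    · intro i
      by_cases hpos : 0 < xstar i
      · exact le_of_lt ((hsign i).1 hpos)
      · have hxi : xstar i = 0 := le_antisymm (not_lt.mp hpos) (hx i)
        have hnui : 0 < nustar i := by have := hstrict i; rw [hxi] at this; simpa using this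
        have : 0 < (ψ p).1.2.2 i := (hsign i).2 hnui
        rcases mul_eq_zero.mp (hcomp3 i) with h' | h'
        · exact le_of_eq h'.symm
        · exact absurd h' (ne_of_gt this)
    · intro i
      by_cases hpos : 0 < xstar i
      · have hxi : 0 < (ψ p).1.1 i := (hsign i).1 hpos
        rcases mul_eq_zero.mp (hcomp3 i) with h' | h'
        · exact absurd h' (ne_of_gt hxi)
        · exact le_of_eq h'.symm
      · have hxi : xstar i = 0 := le_antisymm (not_lt.mp hpos) (hx i)
        have hnui : 0 < nustar i := by have := hstrict i; rw [hxi] at this; simpa using this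
        exact le_of_lt ((hsign i).2 hnui)
end
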